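/- Let G be a nontrivial totally ordered abelian group and a > 0 in G, with M_a = {0} ∪ {g ∈ G : g ≥ a}. The following are equivalent: (a) M_a is a unique factorization monoid; (b) M_a is a half-factorial monoid; (c) G is cyclic and a is the least positive element of G (so M_a equals the nonnegative cone of G). -/

import Mathlib

/-- `x` is invertible within the subset `S` of the ambient monoid. -/
def SUnit {A : Type*} [AddCommMonoid A] (S : Set A) (x : A) : Prop := ∃ y ∈ S, x + y = 0

/-- `a` is an atom of the subset (submonoid) `S`: it is non-invertible in `S` and
cannot be written as a sum of two non-invertible elements of `S`. -/
def SAtom {A : Type*} [AddCommMonoid A] (S : Set A) (a : A) : Prop :=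
  a ∈ S ∧ ¬ SUnit S a ∧ ∀ b ∈ S, ∀ c ∈ S, a = b + c → SUnit S b ∨ SUnit S c

/-- `x` is an atomic element of `S`: invertible in `S` or a finite sum of atoms of `S`. -/
def SAtomicElem {A : Type*} [AddCommMonoid A] (S : Set A) (x : A) : Prop :=
  SUnit S x ∨ ∃ l : Multiset A, (∀ a ∈ l, SAtom S a) ∧ l.sum = x

/-- The subset (submonoid) `S` is atomic. -/
def SAtomic {A : Type*} [AddCommMonoid A] (S : Set A) : Prop :=
  ∀ x ∈ S, SAtomicElem S x

section Aux

variable {G : Type*} [AddCommGroup G] [LinearOrder G] [IsOrderedAddMonoid G] {a : G}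

private lemma memS_iff {x : G} : x ∈ ({0} ∪ Set.Ici a : Set G) ↔ x = 0 ∨ a ≤ x := by
  simp [Set.mem_Ici]

private lemma sunit_zero : SUnit ({0} ∪ Set.Ici a : Set G) 0 :=
  ⟨0, Or.inl rfl, add_zero 0⟩

private lemma sunit_eq_zero (ha : 0 < a) {x : G} (hx : x ∈ ({0} ∪ Set.Ici a : Set G))
    (h : SUnit ({0} ∪ Set.Ici a : Set G) x) : x = 0 := by
  rcases memS_iff.1 hx with h0 | hax
  · exact h0
  · obtain ⟨y, hy, hxy⟩ := h
    rcases memS_iff.1 hy with h0 | hay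
    · subst h0; simpa using hxy
    · exfalso
      have h2 : a + a ≤ 0 := by
        calc a + a ≤ x + y := add_le_add hax hay
        _ = 0 := hxy
      exact absurd h2 (not_le.2 (add_pos ha ha))

private lemma satom_iff (ha : 0 < a) {x : G} :
    SAtom ({0} ∪ Set.Ici a : Set G) x ↔ a ≤ x ∧ x < a + a := by
  constructor
  · rintro ⟨hxS, hxu, hsplit⟩
    have hax : a ≤ x := by
      rcases memS_iff.1 hxS with h0 | hax
      · exact absurd sunit_zero (h0 ▸ hxu)
      · exact hax
    refine ⟨hax, ?_⟩
    by_contra hge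
    push_neg at hge
    have haS : a ∈ ({0} ∪ Set.Ici a : Set G) := memS_iff.2 (Or.inr le_rfl)
    have hxa : x - a ∈ ({0} ∪ Set.Ici a : Set G) :=
      memS_iff.2 (Or.inr (le_sub_iff_add_le.2 hge))
    rcases hsplit a haS (x - a) hxa (by abel) with hu | hu
    · exact absurd (sunit_eq_zero ha haS hu) ha.ne'
    · have h3 : x = a := by
        have := sunit_eq_zero ha hxa hu
        rwa [sub_eq_zero] at this
      rw [h3] at hge
      exact absurd (add_le_iff_nonpos_left.1 hge) (not_le.2 ha)
  · rintro ⟨hax, hx2⟩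
    refine ⟨memS_iff.2 (Or.inr hax), ?_, ?_⟩
    · intro hu
      have h0 := sunit_eq_zero ha (memS_iff.2 (Or.inr hax)) hu
      exact absurd (h0 ▸ hax) (not_le.2 ha)
    · rintro b hb c hc rfl
      rcases memS_iff.1 hb with rfl | hab
      · exact Or.inl sunit_zero
      rcases memS_iff.1 hc with rfl | hac
      · exact Or.inr sunit_zero
      exact absurd hx2 (not_lt.2 (add_le_add hab hac))

/-- HF implies `a` is the least positive element. -/
private lemma hf_least (ha : 0 < a)
    (hf : ∀ x ∈ ({0} ∪ Set.Ici a : Set G), ∀ l₁ l₂ : Multiset G,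
        (∀ b ∈ l₁, SAtom ({0} ∪ Set.Ici a : Set G) b) → l₁.sum = x →
        (∀ b ∈ l₂, SAtom ({0} ∪ Set.Ici a : Set G) b) → l₂.sum = x →
        l₁.card = l₂.card) :
    ∀ g : G, 0 < g → a ≤ g := by
  intro g hg
  by_contra hlt
  push_neg at hlt
  set x : G := a + (a + a) with hx
  have hxS : x ∈ ({0} ∪ Set.Ici a : Set G) :=
    memS_iff.2 (Or.inr (le_add_of_nonneg_right (add_pos ha ha).le))
  have h1 : ∀ b ∈ ((a + g) ::ₘ {a + (a - g)} : Multiset G),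
      SAtom ({0} ∪ Set.Ici a : Set G) b := by
    intro b hb
    simp only [Multiset.mem_cons, Multiset.mem_singleton] at hb
    rcases hb with rfl | rfl
    · exact (satom_iff ha).2 ⟨le_add_of_nonneg_right hg.le, add_lt_add_right hlt a⟩
    · exact (satom_iff ha).2 ⟨le_add_of_nonneg_right (sub_nonneg.2 hlt.le),
        add_lt_add_right (sub_lt_self a hg) a⟩
  have h2 : ∀ b ∈ (Multiset.replicate 3 a), SAtom ({0} ∪ Set.Ici a : Set G) b := by
    intro b hb
    rw [Multiset.eq_of_mem_replicate hb]
    exact (satom_iff ha).2 ⟨le_rfl, lt_add_of_pos_right a ha⟩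
  have hs1 : ((a + g) ::ₘ {a + (a - g)} : Multiset G).sum = x := by
    simp only [Multiset.sum_cons, Multiset.sum_singleton, hx]; abel
  have hs2 : (Multiset.replicate 3 a).sum = x := by
    simp [Multiset.sum_replicate, hx]
  have := hf x hxS _ _ h1 hs1 h2 hs2
  simp at this

/-- HF implies condition (c). -/
private lemma hf_to_c (ha : 0 < a) (hat : SAtomic ({0} ∪ Set.Ici a : Set G))
    (hf : ∀ x ∈ ({0} ∪ Set.Ici a : Set G), ∀ l₁ l₂ : Multiset G,
        (∀ b ∈ l₁, SAtom ({0} ∪ Set.Ici a : Set G) b) → l₁.sum = x →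
        (∀ b ∈ l₂, SAtom ({0} ∪ Set.Ici a : Set G) b) → l₂.sum = x →
        l₁.card = l₂.card) :
    (∃ b : G, ∀ g : G, ∃ n : ℤ, g = n • b) ∧ ∀ g : G, 0 < g → a ≤ g := by
  have hle := hf_least ha hf
  have hatom_eq : ∀ t : G, SAtom ({0} ∪ Set.Ici a : Set G) t → t = a := by
    intro t ht
    obtain ⟨h1, h2⟩ := (satom_iff ha).1 ht
    by_contra hne
    have h3 : 0 < t - a := sub_pos.2 (lt_of_le_of_ne h1 (Ne.symm hne))
    have h4 : a ≤ t - a := hle _ h3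
    exact absurd h2 (not_lt.2 (le_sub_iff_add_le.1 h4))
  have hpos : ∀ g : G, 0 < g → ∃ n : ℕ, g = n • a := by
    intro g hg
    have hgS : g ∈ ({0} ∪ Set.Ici a : Set G) := memS_iff.2 (Or.inr (hle g hg))
    rcases hat g hgS with hu | ⟨l, hl, hsum⟩
    · exact absurd (sunit_eq_zero ha hgS hu) hg.ne'
    · have hrep : l = Multiset.replicate l.card a :=
        Multiset.eq_replicate_card.2 (fun b hb => hatom_eq b (hl b hb))
      refine ⟨l.card, ?_⟩
      rw [← hsum, hrep, Multiset.sum_replicate, Multiset.card_replicate]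
  refine ⟨⟨a, fun g => ?_⟩, hle⟩
  rcases lt_trichotomy g 0 with h | h | h
  · obtain ⟨n, hn⟩ := hpos (-g) (neg_pos.2 h)
    exact ⟨-(n : ℤ), by rw [neg_zsmul, natCast_zsmul, ← hn, neg_neg]⟩
  · exact ⟨0, by simp [h]⟩
  · obtain ⟨n, hn⟩ := hpos g h
    exact ⟨(n : ℤ), by rw [natCast_zsmul, ← hn]⟩

/-- (c) implies UF. -/
private lemma c_to_uf (ha : 0 < a)
    (hc : (∃ b : G, ∀ g : G, ∃ n : ℤ, g = n • b) ∧ ∀ g : G, 0 < g → a ≤ g) :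
    SAtomic ({0} ∪ Set.Ici a : Set G) ∧
      ∀ x ∈ ({0} ∪ Set.Ici a : Set G), ∀ l₁ l₂ : Multiset G,
        (∀ b ∈ l₁, SAtom ({0} ∪ Set.Ici a : Set G) b) → l₁.sum = x →
        (∀ b ∈ l₂, SAtom ({0} ∪ Set.Ici a : Set G) b) → l₂.sum = x →
        l₁ = l₂ := by
  obtain ⟨⟨b, hb⟩, hle⟩ := hc
  have hmono : StrictMono fun n : ℤ => n • a := zsmul_left_strictMono ha
  -- every element is an integer multiple of `a`
  have hgen : ∀ g : G, ∃ n : ℤ, g = n • a := by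
    have hb0 : b ≠ 0 := by
      rintro rfl
      obtain ⟨n, hn⟩ := hb a
      rw [smul_zero] at hn
      exact absurd hn ha.ne'
    obtain ⟨c, hcpos, hbc⟩ : ∃ c : G, 0 < c ∧ ∀ g : G, ∃ n : ℤ, g = n • c := by
      rcases lt_trichotomy b 0 with h | h | h
      · refine ⟨-b, neg_pos.2 h, fun g => ?_⟩
        obtain ⟨n, hn⟩ := hb g
        exact ⟨-n, by rw [hn, neg_zsmul, zsmul_neg, neg_neg]⟩
      · exact absurd h hb0
      · exact ⟨b, h, hb⟩
    have hac : a ≤ c := hle c hcpos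
    obtain ⟨k, hk⟩ := hbc a
    have hcmono : StrictMono fun n : ℤ => n • c := zsmul_left_strictMono hcpos
    have hk1 : 1 ≤ k := by
      by_contra h
      push_neg at h
      have h2 : k • c ≤ (0 : ℤ) • c := hcmono.le_iff_le.2 (by omega)
      rw [zero_zsmul] at h2
      exact absurd (hk ▸ h2) (not_le.2 ha)
    have hk2 : k < 2 := by
      by_contra h
      push_neg at h
      have h2 : (2 : ℤ) • c ≤ k • c := hcmono.le_iff_le.2 h
      rw [two_zsmul] at h2
      have h3 : c < a := by
        calc c < c + c := lt_add_of_pos_left c hcpos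
        _ ≤ k • c := h2
        _ = a := hk.symm
      exact absurd hac (not_le.2 h3)
    have hca : c = a := by
      have hk' : k = 1 := by omega
      rw [hk', one_zsmul] at hk
      exact hk.symm
    intro g
    obtain ⟨n, hn⟩ := hbc g
    exact ⟨n, by rw [hn, hca]⟩
  have hatom_eq : ∀ t : G, SAtom ({0} ∪ Set.Ici a : Set G) t ↔ t = a := by
    intro t
    rw [satom_iff ha]
    constructor
    · rintro ⟨h1, h2⟩
      obtain ⟨n, rfl⟩ := hgen t
      have e1 : (1 : ℤ) • a ≤ n • a := by simpa using h1
      have e2 : n • a < (2 : ℤ) • a := by rw [two_zsmul]; exact h2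
      have n1 : (1 : ℤ) ≤ n := hmono.le_iff_le.1 e1
      have n2 : n < 2 := hmono.lt_iff_lt.1 e2
      have hn1 : n = 1 := by omega
      simp [hn1]
    · intro h
      subst h
      exact ⟨le_rfl, lt_add_of_pos_right _ ha⟩
  constructor
  · -- atomicity
    intro x hx
    rcases memS_iff.1 hx with rfl | hax
    · exact Or.inl sunit_zero
    · obtain ⟨n, rfl⟩ := hgen x
      have hn1 : (1 : ℤ) ≤ n := by
        have e1 : (1 : ℤ) • a ≤ n • a := by simpa using hax
        exact hmono.le_iff_le.1 e1
      refine Or.inr ⟨Multiset.replicate n.toNat a, ?_, ?_⟩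
      · intro t ht
        rw [Multiset.eq_of_mem_replicate ht]
        exact (hatom_eq a).2 rfl
      · rw [Multiset.sum_replicate, ← natCast_zsmul, Int.toNat_of_nonneg (by omega)]
  · -- uniqueness
    intro x hx l₁ l₂ h1 hs1 h2 hs2
    have e1 : l₁ = Multiset.replicate l₁.card a :=
      Multiset.eq_replicate_card.2 (fun t ht => (hatom_eq t).1 (h1 t ht))
    have e2 : l₂ = Multiset.replicate l₂.card a :=
      Multiset.eq_replicate_card.2 (fun t ht => (hatom_eq t).1 (h2 t ht))
    have hcard : l₁.card = l₂.card := by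
      have hsum : l₁.card • a = l₂.card • a := by
        rw [← Multiset.sum_replicate, ← Multiset.sum_replicate, ← e1, ← e2, hs1, hs2]
      exact (StrictMono.injective
        (fun m n (hmn : m < n) => nsmul_lt_nsmul_left ha hmn)) hsum
    rw [e1, e2, hcard]

end Aux

/-- For the conductive positive monoid `M_a = {0} ∪ G_{≥ a}` of a nontrivial totally
ordered abelian group `G` (with `a > 0`), the following are equivalent:
(a) `M_a` is a unique factorization monoid; (b) `M_a` is a half-factorial monoid;
(c) `G` is cyclic and `a` is the least positive element of `G`. -/
theorem conductive_monoid_uf_iff_hf {G : Type*} [AddCommGroup G] [LinearOrder G] [IsOrderedAddMonoid G]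
    [Nontrivial G] (a : G) (ha : 0 < a) :
    ((SAtomic ({0} ∪ Set.Ici a : Set G) ∧
      ∀ x ∈ ({0} ∪ Set.Ici a : Set G), ∀ l₁ l₂ : Multiset G,
        (∀ b ∈ l₁, SAtom ({0} ∪ Set.Ici a : Set G) b) → l₁.sum = x →
        (∀ b ∈ l₂, SAtom ({0} ∪ Set.Ici a : Set G) b) → l₂.sum = x →
        l₁ = l₂) ↔
     (SAtomic ({0} ∪ Set.Ici a : Set G) ∧
      ∀ x ∈ ({0} ∪ Set.Ici a : Set G), ∀ l₁ l₂ : Multiset G,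
        (∀ b ∈ l₁, SAtom ({0} ∪ Set.Ici a : Set G) b) → l₁.sum = x →
        (∀ b ∈ l₂, SAtom ({0} ∪ Set.Ici a : Set G) b) → l₂.sum = x →
        l₁.card = l₂.card)) ∧
    ((SAtomic ({0} ∪ Set.Ici a : Set G) ∧
      ∀ x ∈ ({0} ∪ Set.Ici a : Set G), ∀ l₁ l₂ : Multiset G,
        (∀ b ∈ l₁, SAtom ({0} ∪ Set.Ici a : Set G) b) → l₁.sum = x →
        (∀ b ∈ l₂, SAtom ({0} ∪ Set.Ici a : Set G) b) → l₂.sum = x →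
        l₁.card = l₂.card) ↔
     ((∃ b : G, ∀ g : G, ∃ n : ℤ, g = n • b) ∧ ∀ g : G, 0 < g → a ≤ g)) := by
  constructor
  · constructor
    · rintro ⟨hat, huf⟩
      exact ⟨hat, fun x hx l₁ l₂ p1 p2 p3 p4 => by rw [huf x hx l₁ l₂ p1 p2 p3 p4]⟩
    · rintro ⟨hat, hhf⟩
      exact c_to_uf ha (hf_to_c ha hat hhf)
  · constructor
    · rintro ⟨hat, hhf⟩
      exact hf_to_c ha hat hhf
    · intro hc
      obtain ⟨hat, huf⟩ := c_to_uf ha hc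
      exact ⟨hat, fun x hx l₁ l₂ p1 p2 p3 p4 => by rw [huf x hx l₁ l₂ p1 p2 p3 p4]⟩
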